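/- Let L be an integral ℓ-monoid, let α be a fuzzy regular expression over a finite alphabet X with associated alphabet Y, let A = (A, X∪Y, δ^A, a₀, τ^A) be an arbitrary nondeterministic finite automaton recognizing ‖α_R‖, and let A^r_α be the reduced fuzzy automaton associated with A and α. Then L(A^r_α) = ‖α‖, i.e., L(A^r_α)(u) = ‖α‖(u) for every u ∈ X*. -/

import Mathlib

attribute [local instance] Classical.propDecidable

/-- A lattice-ordered monoid (ℓ-monoid): a lattice with least element `⊥` and greatest
element `⊤`, together with a monoid structure (multiplication `*`, unit `1`, playing the
role of `e`) such that `⊥` (playing the role of the scalar `0`) is absorbing and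
multiplication distributes over binary joins on both sides. -/
class LMonoid (L : Type*) extends Lattice L, BoundedOrder L, Monoid L where
  mul_bot : ∀ x : L, x * ⊥ = ⊥
  bot_mul : ∀ x : L, ⊥ * x = ⊥
  mul_sup : ∀ x y z : L, x * (y ⊔ z) = x * y ⊔ x * z
  sup_mul : ∀ x y z : L, (x ⊔ y) * z = x * z ⊔ y * z

/-- An integral ℓ-monoid: the unit of the multiplication is the top element of the lattice. -/
class IntegralLMonoid (L : Type*) extends LMonoid L where
  one_eq_top : (1 : L) = ⊤

/-- Fuzzy regular expressions over an alphabet `X` with scalars in `L`. -/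
inductive FRE (X L : Type*) where
  | zero : FRE X L
  | eps : FRE X L
  | char : X → FRE X L
  | smul : L → FRE X L → FRE X L
  | plus : FRE X L → FRE X L → FRE X L
  | comp : FRE X L → FRE X L → FRE X L
  | star : FRE X L → FRE X L

/-- The set of scalars of `L` occurring in a fuzzy regular expression. -/
def FRE.scalars {X L : Type*} : FRE X L → Set L
  | .zero => ∅
  | .eps => ∅
  | .char _ => ∅
  | .smul lam β => insert lam β.scalars
  | .plus β γ => β.scalars ∪ γ.scalars
  | .comp β γ => β.scalars ∪ γ.scalars
  | .star β => β.scalars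

noncomputable section

namespace Fz

variable {L : Type*} [IntegralLMonoid L]

/-- Composition of fuzzy relations: `(R ∘ S)(a,b) = ⋁_{c} R(a,c) ⊗ S(c,b)`. -/
def fcomp {A : Type*} [Fintype A] (R S : A → A → L) : A → A → L :=
  fun a b => Finset.univ.sup fun c => R a c * S c b

/-- Composition of a fuzzy relation with a fuzzy set: `(R ∘ f)(a) = ⋁_{b} R(a,b) ⊗ f(b)`. -/
def fcompf {A : Type*} [Fintype A] (R : A → A → L) (f : A → L) : A → L :=
  fun a => Finset.univ.sup fun b => R a b * f b

/-- Composition of a fuzzy set with a fuzzy relation: `(f ∘ R)(a) = ⋁_{b} f(b) ⊗ R(b,a)`. -/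
def fcompfR {A : Type*} [Fintype A] (f : A → L) (R : A → A → L) : A → L :=
  fun a => Finset.univ.sup fun b => f b * R b a

/-- Powers of a fuzzy relation: `R⁰` is the crisp equality and `R^{k+1} = R^k ∘ R`. -/
def rpow {A : Type*} [Fintype A] (R : A → A → L) : ℕ → A → A → L
  | 0 => fun a b => if a = b then 1 else ⊥
  | k + 1 => fcomp (rpow R k) R

private def dstarAux {A Z : Type*} [Fintype A] (δ : A → Z → A → L) : A → List Z → A → L
  | a, [], b => if a = b then 1 else ⊥
  | a, z :: w, b => Finset.univ.sup fun c => dstarAux δ a w c * δ c z b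

/-- The extension of a fuzzy transition relation to words:
`δ(a, ε, b) = 1` if `a = b` and `⊥` otherwise, and
`δ(a, ux, b) = ⋁_{c} δ(a, u, c) ⊗ δ(c, x, b)`. -/
def dstar {A Z : Type*} [Fintype A] (δ : A → Z → A → L) (a : A) (w : List Z) (b : A) : L :=
  dstarAux δ a w.reverse b

/-- Fuzzy language recognized by a fuzzy automaton with a single crisp initial state `a0`:
`L(A)(u) = ⋁_{b} δ(a0, u, b) ⊗ τ(b)`. -/
def lang {A Z : Type*} [Fintype A] (δ : A → Z → A → L) (a0 : A) (τ : A → L)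
    (w : List Z) : L :=
  Finset.univ.sup fun b => dstar δ a0 w b * τ b

/-- Concatenation of fuzzy languages: `(fg)(u) = ⋁_{u = vw} f(v) ⊗ g(w)`
(a finite join over the factorizations of `u`). -/
def fconcat {X : Type*} (f g : List X → L) : List X → L :=
  fun u => (Finset.range (u.length + 1)).sup fun i => f (u.take i) * g (u.drop i)

/-- Powers of a fuzzy language: `f⁰` is the characteristic function of the empty word,
and `f^{n+1} = fⁿ f`. -/
def fpow {X : Type*} (f : List X → L) : ℕ → List X → L
  | 0 => fun u => if u = [] then 1 else ⊥
  | n + 1 => fconcat (fpow f n) f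

/-- `IsNorm α f` asserts that `f` is the fuzzy language `‖α‖` represented by the fuzzy
regular expression `α` (for the star, `‖β*‖(u)` is the least upper bound of the powers,
which is required to exist). -/
inductive IsNorm {X : Type*} : FRE X L → (List X → L) → Prop
  | zero : IsNorm .zero fun _ => ⊥
  | eps : IsNorm .eps fun u => if u = [] then 1 else ⊥
  | char (x : X) : IsNorm (.char x) fun u => if u = [x] then 1 else ⊥
  | smul (lam : L) {β : FRE X L} {f : List X → L} :
      IsNorm β f → IsNorm (.smul lam β) fun u => lam * f u
  | plus {β γ : FRE X L} {f g : List X → L} :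
      IsNorm β f → IsNorm γ g → IsNorm (.plus β γ) fun u => f u ⊔ g u
  | comp {β γ : FRE X L} {f g : List X → L} :
      IsNorm β f → IsNorm γ g → IsNorm (.comp β γ) (fconcat f g)
  | star {β : FRE X L} {f g : List X → L} :
      IsNorm β f → (∀ u, IsLUB {l | ∃ n : ℕ, l = fpow f n u} (g u)) →
      IsNorm (.star β) g

/-- The ordinary regular expression `α_R` over `X ∪ Y` obtained from a fuzzy regular
expression `α` by replacing each scalar `λ` by the associated letter `λ' = sc λ ∈ Y`. -/
def toReg {X Y : Type*} (sc : L → Y) : FRE X L → RegularExpression (X ⊕ Y)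
  | .zero => 0
  | .eps => 1
  | .char x => RegularExpression.char (Sum.inl x)
  | .smul lam β => RegularExpression.char (Sum.inr (sc lam)) * toReg sc β
  | .plus β γ => toReg sc β + toReg sc γ
  | .comp β γ => toReg sc β * toReg sc γ
  | .star β => (toReg sc β).star

/-- `U_Y(u)`: the set of words over `X ∪ Y` from which deleting all letters of `Y`
yields `u` (the shuffle of `u` with `Y*`). -/
def UY {X : Type*} (Y : Type*) (u : List X) : Set (List (X ⊕ Y)) :=
  {v | v.filterMap (fun z => z.getLeft?) = u}

/-- The homomorphism `φ*_α : (X ∪ Y)* → (L, ⊗, 1)` determined by mapping every letter of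
`X` to `1` and every letter `λ' ∈ Y` to the corresponding scalar `λ = φY λ'`. -/
def phiStar {X Y : Type*} (φY : Y → L) (v : List (X ⊕ Y)) : L :=
  (v.map (Sum.elim (fun _ => (1 : L)) φY)).prod

/-- The language `‖α_R‖` of the regular expression `α_R`, viewed as a fuzzy language
with membership values in `{0, 1} ⊆ L`. -/
def langR {X Y : Type*} (sc : L → Y) (α : FRE X L) (v : List (X ⊕ Y)) : L :=
  if v ∈ (toReg sc α).matches' then 1 else ⊥

/-- The reflexive fuzzy relation `R` on the state set of a nondeterministic automaton over
`X ∪ Y`: `R(a,a) = 1` and, for `a ≠ b`, `R(a,b) = ⋁_{λ' ∈ Y} λ ⊗ δ(a, λ', b)`. -/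
def Rstep {X Y A : Type*} [Fintype A] [Fintype Y] (φY : Y → L)
    (δ : A → X ⊕ Y → A → L) : A → A → L :=
  fun a b => if a = b then 1 else Finset.univ.sup fun y : Y => φY y * δ a (Sum.inr y) b

/-- The fuzzy relation `R_A = Rⁿ`, `n = |A|`: the least transitive fuzzy relation
containing `R`. -/
def RA {X Y A : Type*} [Fintype A] [Fintype Y] (φY : Y → L)
    (δ : A → X ⊕ Y → A → L) : A → A → L :=
  rpow (Rstep φY δ) (Fintype.card A)

/-- The set `{φ*_α(v) ⊗ δ^A(a,v,b) : v ∈ U_Y(x)}` whose least upper bound defines the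
transition `δ^{A_α}(a, x, b)` of the fuzzy automaton associated with `A` and `α`. -/
def dset {X Y A : Type*} [Fintype A] (φY : Y → L) (δ : A → X ⊕ Y → A → L)
    (a : A) (x : X) (b : A) : Set L :=
  {l | ∃ v ∈ UY Y [x], l = phiStar φY v * dstar δ a v b}

/-- The set `{⋁_{b} φ*_α(v) ⊗ δ^A(a,v,b) ⊗ τ(b) : v ∈ Y*}` whose least upper bound defines
the terminal degree `τ^{A_α}(a)` of the fuzzy automaton associated with `A` and `α`. -/
def tset {X Y A : Type*} [Fintype A] (φY : Y → L) (δ : A → X ⊕ Y → A → L)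
    (τ : A → L) (a : A) : Set L :=
  {l | ∃ w : List Y, l = Finset.univ.sup fun b =>
    phiStar φY ((w.map Sum.inr : List (X ⊕ Y))) *
      dstar δ a (w.map Sum.inr) b * τ b}

end Fz

end

/-- The state set `A^r_α = {a₀} ∪ {a ∈ A : δ(b,x,a) = 1 for some b ∈ A, x ∈ X}` of the
reduced fuzzy automaton. -/
def redStates {L X Y A : Type*} [IntegralLMonoid L] (δ : A → X ⊕ Y → A → L) (a0 : A) :
    Set A :=
  {a | a = a0 ∨ ∃ (b : A) (x : X), δ b (Sum.inl x) a = 1}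


section AlgebraHelpers

variable {L : Type*} [IntegralLMonoid L]

lemma ILM.le_one (x : L) : x ≤ 1 := by
  rw [IntegralLMonoid.one_eq_top]; exact le_top

lemma ILM.mul_le_mul_left {x y : L} (h : x ≤ y) (z : L) : z * x ≤ z * y := by
  have := LMonoid.mul_sup z x y
  rw [sup_eq_right.mpr h] at this
  rw [this]; exact le_sup_left

lemma ILM.mul_le_mul_right {x y : L} (h : x ≤ y) (z : L) : x * z ≤ y * z := by
  have := LMonoid.sup_mul x y z
  rw [sup_eq_right.mpr h] at this
  rw [this]; exact le_sup_left

lemma ILM.mul_le_mul {x y z w : L} (h1 : x ≤ y) (h2 : z ≤ w) : x * z ≤ y * w :=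
  le_trans (ILM.mul_le_mul_left h2 x) (ILM.mul_le_mul_right h1 w)

lemma ILM.mul_le_left (x y : L) : x * y ≤ x := by
  calc x * y ≤ x * 1 := ILM.mul_le_mul_left (ILM.le_one y) x
  _ = x := mul_one x

lemma ILM.mul_le_right (x y : L) : x * y ≤ y := by
  calc x * y ≤ 1 * y := ILM.mul_le_mul_right (ILM.le_one x) y
  _ = y := one_mul y

lemma ILM.mul_finset_sup {I : Type*} (F : Finset I) (f : I → L) (a : L) :
    a * F.sup f = F.sup (fun i => a * f i) := by
  classical
  induction F using Finset.induction_on with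
  | empty => simpa using LMonoid.mul_bot a
  | insert _ _ h ih =>
      rw [Finset.sup_insert, Finset.sup_insert, LMonoid.mul_sup, ih]

lemma ILM.finset_sup_mul {I : Type*} (F : Finset I) (f : I → L) (a : L) :
    F.sup f * a = F.sup (fun i => f i * a) := by
  classical
  induction F using Finset.induction_on with
  | empty => simpa using LMonoid.bot_mul a
  | insert _ _ h ih =>
      rw [Finset.sup_insert, Finset.sup_insert, LMonoid.sup_mul, ih]

/-- crisp elements -/
def Crisp (x : L) : Prop := x = 1 ∨ x = ⊥

lemma Crisp.one : Crisp (1 : L) := Or.inl rfl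
lemma Crisp.bot : Crisp (⊥ : L) := Or.inr rfl

lemma Crisp.ite {p : Prop} [Decidable p] : Crisp (if p then (1:L) else ⊥) := by
  by_cases h : p <;> simp [h, Crisp.one, Crisp.bot, Crisp]

lemma Crisp.mul {x y : L} (hx : Crisp x) (hy : Crisp y) : Crisp (x * y) := by
  rcases hx with h | h <;> rcases hy with h' | h' <;> subst h <;> subst h' <;>
    simp [Crisp, LMonoid.mul_bot, LMonoid.bot_mul]

lemma Crisp.comm {x : L} (hx : Crisp x) (y : L) : x * y = y * x := by
  rcases hx with h | h <;> subst h <;> simp [LMonoid.mul_bot, LMonoid.bot_mul]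

lemma Crisp.sup {x y : L} (hx : Crisp x) (hy : Crisp y) : Crisp (x ⊔ y) := by
  have h1 : ∀ z : L, z ⊔ (1:L) = 1 := fun z => by
    rw [IntegralLMonoid.one_eq_top]; exact sup_top_eq z
  have h2 : ∀ z : L, (1:L) ⊔ z = 1 := fun z => by
    rw [IntegralLMonoid.one_eq_top]; exact top_sup_eq z
  rcases hx with h | h <;> rcases hy with h' | h' <;> subst h <;> subst h'
  · exact Or.inl (h1 1)
  · exact Or.inl (h2 ⊥)
  · exact Or.inl (h1 ⊥)
  · exact Or.inr (by simp)

lemma Crisp.finset_sup {I : Type*} {F : Finset I} {f : I → L}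
    (h : ∀ i ∈ F, Crisp (f i)) : Crisp (F.sup f) := by
  classical
  induction F using Finset.induction_on with
  | empty => simpa using Crisp.bot
  | insert _ _ hni ih =>
      rw [Finset.sup_insert]
      exact Crisp.sup (h _ (Finset.mem_insert_self _ _))
        (ih fun i hi => h i (Finset.mem_insert_of_mem hi))

lemma Crisp.mul_eq_one {x y : L} (hx : Crisp x) (hy : Crisp y)
    (h : x * y = 1) (hne : (1:L) ≠ ⊥) : x = 1 ∧ y = 1 := by
  rcases hx with h1 | h1 <;> rcases hy with h2 | h2 <;> subst h1 <;> subst h2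
  · exact ⟨rfl, rfl⟩
  · rw [LMonoid.mul_bot] at h; exact (hne h.symm).elim
  · rw [LMonoid.bot_mul] at h; exact (hne h.symm).elim
  · rw [LMonoid.mul_bot] at h; exact (hne h.symm).elim

lemma Crisp.sup_eq_one {I : Type*} {F : Finset I} {f : I → L}
    (hc : ∀ i ∈ F, Crisp (f i)) (h : F.sup f = 1) (hne : (1:L) ≠ ⊥) :
    ∃ i ∈ F, f i = 1 := by
  classical
  by_contra hcon
  push_neg at hcon
  have : F.sup f = ⊥ := by
    apply le_antisymm _ bot_le
    apply Finset.sup_le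
    intro i hi
    rcases hc i hi with h1 | h1
    · exact (hcon i hi h1).elim
    · rw [h1]
  rw [h] at this; exact hne this

lemma ILM.trivial_of_one_eq_bot (h : (1:L) = ⊥) (x : L) : x = ⊥ := by
  calc x = x * 1 := (mul_one x).symm
  _ = x * ⊥ := by rw [h]
  _ = ⊥ := LMonoid.mul_bot x

end AlgebraHelpers

namespace Fz

variable {L : Type*} [IntegralLMonoid L]

lemma sup_collapse_right {A : Type*} [Fintype A] (f : A → L) (b : A) :
    (Finset.univ.sup fun c => f c * (if c = b then (1:L) else ⊥)) = f b := by
  classical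
  apply le_antisymm
  · apply Finset.sup_le
    intro c _
    by_cases h : c = b
    · subst h; simp
    · simp [h, LMonoid.mul_bot]
  · have := Finset.le_sup (f := fun c => f c * (if c = b then (1:L) else ⊥))
      (Finset.mem_univ b)
    simpa using this

lemma sup_collapse_left {A : Type*} [Fintype A] (f : A → L) (a : A) :
    (Finset.univ.sup fun c => (if a = c then (1:L) else ⊥) * f c) = f a := by
  classical
  apply le_antisymm
  · apply Finset.sup_le
    intro c _
    by_cases h : a = c
    · subst h; simp
    · simp [h, LMonoid.bot_mul]
  · have := Finset.le_sup (f := fun c => (if a = c then (1:L) else ⊥) * f c)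
      (Finset.mem_univ a)
    simpa using this

lemma dstar_nil {A Z : Type*} [Fintype A] (δ : A → Z → A → L) (a b : A) :
    dstar δ a ([] : List Z) b = if a = b then 1 else ⊥ := rfl

lemma dstar_snoc {A Z : Type*} [Fintype A] (δ : A → Z → A → L) (a b : A)
    (w : List Z) (z : Z) :
    dstar δ a (w ++ [z]) b = Finset.univ.sup fun c => dstar δ a w c * δ c z b := by
  unfold dstar
  rw [List.reverse_append]
  rfl

private lemma dstarAux_append {A Z : Type*} [Fintype A] (δ : A → Z → A → L)
    (w1 : List Z) : ∀ (w2 : List Z) (a b : A),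
    dstarAux δ a (w1 ++ w2) b =
      Finset.univ.sup fun c => dstarAux δ a w2 c * dstarAux δ c w1 b := by
  induction w1 with
  | nil =>
      intro w2 a b
      simp only [List.nil_append]
      rw [show (fun c => dstarAux δ a w2 c * dstarAux δ c ([]:List Z) b)
          = fun c => dstarAux δ a w2 c * (if c = b then 1 else ⊥) from rfl]
      rw [sup_collapse_right]
  | cons z t ih =>
      intro w2 a b
      show (Finset.univ.sup fun d => dstarAux δ a (t ++ w2) d * δ d z b) = _
      have : ∀ d, dstarAux δ a (t ++ w2) d * δ d z b
          = Finset.univ.sup fun c => dstarAux δ a w2 c * (dstarAux δ c t d * δ d z b) := by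
        intro d
        rw [ih w2 a d, ILM.finset_sup_mul]
        congr 1; funext c; rw [mul_assoc]
      simp only [this]
      rw [Finset.sup_comm]
      congr 1; funext c
      rw [← ILM.mul_finset_sup]
      rfl

lemma dstar_append {A Z : Type*} [Fintype A] (δ : A → Z → A → L)
    (w1 w2 : List Z) (a b : A) :
    dstar δ a (w1 ++ w2) b =
      Finset.univ.sup fun c => dstar δ a w1 c * dstar δ c w2 b := by
  unfold dstar
  rw [List.reverse_append]
  exact dstarAux_append δ w2.reverse w1.reverse a b

lemma dstar_cons {A Z : Type*} [Fintype A] (δ : A → Z → A → L)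
    (z : Z) (w : List Z) (a b : A) :
    dstar δ a (z :: w) b = Finset.univ.sup fun c => δ a z c * dstar δ c w b := by
  have : (z :: w) = [z] ++ w := rfl
  rw [this, dstar_append]
  congr 1; funext c
  congr 1
  show dstar δ a ([] ++ [z]) c = δ a z c
  rw [dstar_snoc]
  exact sup_collapse_left (fun d => δ d z c) a

lemma dstar_single {A Z : Type*} [Fintype A] (δ : A → Z → A → L) (z : Z) (a b : A) :
    dstar δ a [z] b = δ a z b := by
  show dstar δ a ([] ++ [z]) b = δ a z b
  rw [dstar_snoc]
  exact sup_collapse_left (fun d => δ d z b) a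

lemma dstar_crisp {A Z : Type*} [Fintype A] {δ : A → Z → A → L}
    (hδ : ∀ a z b, Crisp (δ a z b)) (a : A) (w : List Z) (b : A) :
    Crisp (dstar δ a w b) := by
  induction w generalizing a with
  | nil => rw [dstar_nil]; exact Crisp.ite
  | cons z t ih =>
      rw [dstar_cons]
      exact Crisp.finset_sup fun c _ => Crisp.mul (hδ a z c) (ih c)

lemma phiStar_nil {X Y : Type*} (φY : Y → L) : phiStar φY ([] : List (X ⊕ Y)) = 1 := rfl

lemma phiStar_cons {X Y : Type*} (φY : Y → L) (z : X ⊕ Y) (v : List (X ⊕ Y)) :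
    phiStar φY (z :: v) = Sum.elim (fun _ => (1:L)) φY z * phiStar φY v := by
  unfold phiStar; rw [List.map_cons, List.prod_cons]

lemma phiStar_cons_inl {X Y : Type*} (φY : Y → L) (x : X) (v : List (X ⊕ Y)) :
    phiStar φY (Sum.inl x :: v) = phiStar φY v := by
  rw [phiStar_cons]; simp

lemma phiStar_cons_inr {X Y : Type*} (φY : Y → L) (y : Y) (v : List (X ⊕ Y)) :
    phiStar φY (Sum.inr y :: v) = φY y * phiStar φY v := by
  rw [phiStar_cons]; simp

lemma phiStar_append {X Y : Type*} (φY : Y → L) (v w : List (X ⊕ Y)) :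
    phiStar φY (v ++ w) = phiStar φY v * phiStar φY w := by
  unfold phiStar; rw [List.map_append, List.prod_append]

lemma phiStar_le_one {X Y : Type*} (φY : Y → L) (v : List (X ⊕ Y)) :
    phiStar φY v ≤ 1 := ILM.le_one _

lemma mem_UY {X Y : Type*} (u : List X) (v : List (X ⊕ Y)) :
    v ∈ UY Y u ↔ v.filterMap (fun z => z.getLeft?) = u := Iff.rfl

lemma UY_append {X Y : Type*} {u1 u2 : List X} {v1 v2 : List (X ⊕ Y)}
    (h1 : v1 ∈ UY Y u1) (h2 : v2 ∈ UY Y u2) : v1 ++ v2 ∈ UY Y (u1 ++ u2) := by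
  rw [mem_UY] at *
  rw [List.filterMap_append, h1, h2]

lemma UY_nil_iff {X Y : Type*} (v : List (X ⊕ Y)) :
    v ∈ UY Y ([] : List X) ↔ ∃ w : List Y, v = w.map Sum.inr := by
  rw [mem_UY]
  constructor
  · intro h
    induction v with
    | nil => exact ⟨[], rfl⟩
    | cons z t ih =>
        cases z with
        | inl x => simp [List.filterMap_cons] at h
        | inr y =>
            rw [List.filterMap_cons] at h
            simp only [Sum.getLeft?] at h
            obtain ⟨w, hw⟩ := ih h
            exact ⟨y :: w, by rw [hw]; rfl⟩
  · rintro ⟨w, rfl⟩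
    induction w with
    | nil => rfl
    | cons y t ih => rw [List.map_cons, List.filterMap_cons]; simpa using ih

lemma map_inr_mem_UY_nil {X Y : Type*} (w : List Y) :
    (w.map Sum.inr : List (X ⊕ Y)) ∈ UY Y ([] : List X) :=
  (UY_nil_iff _).mpr ⟨w, rfl⟩

lemma UY_cons_iff {X Y : Type*} (x : X) (u : List X) (v : List (X ⊕ Y))
    (h : v ∈ UY Y (x :: u)) :
    ∃ (w : List Y) (v' : List (X ⊕ Y)),
      v = w.map Sum.inr ++ Sum.inl x :: v' ∧ v' ∈ UY Y u := by
  rw [mem_UY] at h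
  induction v with
  | nil => simp at h
  | cons z t ih =>
      cases z with
      | inl x' =>
          rw [List.filterMap_cons] at h
          simp only [Sum.getLeft?] at h
          rw [List.cons.injEq] at h
          obtain ⟨rfl, h2⟩ := h
          exact ⟨[], t, rfl, h2⟩
      | inr y =>
          rw [List.filterMap_cons] at h
          simp only [Sum.getLeft?] at h
          obtain ⟨w, v', rfl, hv'⟩ := ih h
          exact ⟨y :: w, v', rfl, hv'⟩

end Fz

namespace Fz

variable {L : Type*} [IntegralLMonoid L] {A : Type*} [Fintype A]

lemma rpow_zero (R : A → A → L) (a b : A) :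
    rpow R 0 a b = if a = b then 1 else ⊥ := rfl

lemma rpow_succ (R : A → A → L) (k : ℕ) (a b : A) :
    rpow R (k+1) a b = Finset.univ.sup fun c => rpow R k a c * R c b := rfl

lemma rpow_one (R : A → A → L) (a b : A) : rpow R 1 a b = R a b := by
  rw [rpow_succ]
  exact sup_collapse_left (fun c => R c b) a

lemma rpow_le_succ {R : A → A → L} (hrefl : ∀ a, R a a = 1) (k : ℕ) (a b : A) :
    rpow R k a b ≤ rpow R (k+1) a b := by
  rw [rpow_succ]
  have := Finset.le_sup (f := fun c => rpow R k a c * R c b) (Finset.mem_univ b)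
  simpa [hrefl b] using this

lemma rpow_mono {R : A → A → L} (hrefl : ∀ a, R a a = 1) {k m : ℕ} (h : k ≤ m)
    (a b : A) : rpow R k a b ≤ rpow R m a b := by
  induction m with
  | zero => simpa [Nat.le_zero.mp h] using le_refl _
  | succ m ih =>
      rcases Nat.lt_or_ge k (m+1) with h' | h'
      · exact le_trans (ih (Nat.lt_succ_iff.mp h')) (rpow_le_succ hrefl m a b)
      · have : k = m + 1 := le_antisymm h h'
        subst this; exact le_refl _

lemma rpow_one_add (R : A → A → L) (k : ℕ) (a b : A) :
    rpow R (1+k) a b = Finset.univ.sup fun c => R a c * rpow R k c b := by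
  induction k generalizing b with
  | zero =>
      rw [show 1 + 0 = 1 from rfl, rpow_one]
      rw [show (fun c => R a c * rpow R 0 c b) = fun c => R a c * (if c = b then 1 else ⊥)
        from rfl]
      rw [sup_collapse_right]
  | succ k ih =>
      rw [show 1 + (k+1) = (1+k) + 1 from rfl, rpow_succ]
      have : ∀ d, rpow R (1+k) a d * R d b
          = Finset.univ.sup fun c => R a c * (rpow R k c d * R d b) := by
        intro d
        rw [ih d, ILM.finset_sup_mul]
        congr 1; funext c; rw [mul_assoc]
      simp only [this]
      rw [Finset.sup_comm]
      congr 1; funext c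
      rw [← ILM.mul_finset_sup, rpow_succ]

/-- Product of the `R`-steps along a list of states. -/
def vprod (R : A → A → L) : List A → L
  | [] => 1
  | [_] => 1
  | a :: b :: t => R a b * vprod R (b :: t)

lemma vprod_le_one (R : A → A → L) (l : List A) : vprod R l ≤ 1 := ILM.le_one _

lemma vprod_pair (R : A → A → L) (a b : A) : vprod R [a, b] = R a b := by
  show R a b * vprod R [b] = R a b
  rw [show vprod R [b] = 1 from rfl, mul_one]

lemma vprod_le_rpow (R : A → A → L) :
    ∀ (l : List A) (a b : A), vprod R (a :: l ++ [b]) ≤ rpow R (l.length + 1) a b := by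
  intro l
  induction l with
  | nil =>
      intro a b
      show vprod R [a, b] ≤ rpow R ([].length + 1) a b
      rw [vprod_pair, List.length_nil, rpow_one]
  | cons c t ih =>
      intro a b
      have h1 : vprod R (a :: (c :: t) ++ [b]) = R a c * vprod R (c :: t ++ [b]) := rfl
      rw [h1]
      calc R a c * vprod R (c :: t ++ [b])
          ≤ R a c * rpow R (t.length + 1) c b := ILM.mul_le_mul_left (ih c b) _
        _ ≤ rpow R (1 + (t.length + 1)) a b := by
            rw [rpow_one_add]
            exact Finset.le_sup (f := fun d => R a d * rpow R (t.length+1) d b)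
              (Finset.mem_univ c)
        _ = rpow R ((c :: t).length + 1) a b := by
            rw [List.length_cons, Nat.add_comm 1 (t.length + 1)]

lemma vprod_glue (R : A → A → L) (c : A) (q : List A) :
    ∀ (p : List A), vprod R (p ++ c :: q) = vprod R (p ++ [c]) * vprod R (c :: q) := by
  intro p
  induction p with
  | nil => rw [List.nil_append, List.nil_append,
      show vprod R [c] = 1 from rfl, one_mul]
  | cons a p ih =>
      cases p with
      | nil =>
          show vprod R (a :: c :: q) = vprod R [a, c] * vprod R (c :: q)
          rw [vprod_pair]; rfl
      | cons a' p' =>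
          show R a a' * vprod R (a' :: (p' ++ c :: q))
            = (R a a' * vprod R (a' :: p' ++ [c])) * vprod R (c :: q)
          rw [show a' :: (p' ++ c :: q) = (a' :: p') ++ c :: q from rfl, ih, mul_assoc]

lemma vprod_splice (R : A → A → L) (s : List A) (x : A) (t u : List A) :
    vprod R (s ++ x :: (t ++ x :: u)) ≤ vprod R (s ++ x :: u) := by
  have h1 : vprod R (s ++ x :: (t ++ x :: u))
      = vprod R (s ++ [x]) * vprod R (x :: (t ++ x :: u)) := vprod_glue R x _ s
  have h2 : vprod R (x :: (t ++ x :: u))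
      = vprod R (x :: t ++ [x]) * vprod R (x :: u) := by
    have := vprod_glue R x u (x :: t)
    rw [show (x :: t) ++ x :: u = x :: (t ++ x :: u) from rfl] at this
    exact this
  have h3 : vprod R (s ++ x :: u) = vprod R (s ++ [x]) * vprod R (x :: u) :=
    vprod_glue R x u s
  rw [h1, h2, h3]
  calc vprod R (s ++ [x]) * (vprod R (x :: t ++ [x]) * vprod R (x :: u))
      ≤ vprod R (s ++ [x]) * (1 * vprod R (x :: u)) :=
        ILM.mul_le_mul_left (ILM.mul_le_mul_right (vprod_le_one R _) _) _
    _ = vprod R (s ++ [x]) * vprod R (x :: u) := by rw [one_mul]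

lemma exists_dup_decomp : ∀ (l : List A), ¬ l.Nodup →
    ∃ (s : List A) (x : A) (t u : List A), l = s ++ x :: t ++ x :: u := by
  intro l
  induction l with
  | nil => intro h; exact (h List.nodup_nil).elim
  | cons c r ih =>
      intro h
      rw [List.nodup_cons] at h
      push_neg at h
      by_cases hc : c ∈ r
      · obtain ⟨t, u, rfl⟩ := List.append_of_mem hc
        exact ⟨[], c, t, u, rfl⟩
      · obtain ⟨s, x, t, u, rfl⟩ := ih (h hc)
        exact ⟨c :: s, x, t, u, rfl⟩

lemma vprod_le_rpow_card {R : A → A → L} (hrefl : ∀ a, R a a = 1) :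
    ∀ (n : ℕ) (l : List A), l.length = n → ∀ (a b : A),
      vprod R (a :: l ++ [b]) ≤ rpow R (Fintype.card A) a b := by
  intro n
  induction n using Nat.strong_induction_on with
  | _ n ih =>
      intro l hl a b
      rcases Nat.lt_or_ge n (Fintype.card A) with hlt | hge
      · calc vprod R (a :: l ++ [b]) ≤ rpow R (l.length + 1) a b := vprod_le_rpow R l a b
          _ ≤ rpow R (Fintype.card A) a b := by
              apply rpow_mono hrefl
              omega
      · -- a :: l has length n + 1 > card A, so it has a duplicate
        have hnd : ¬ (a :: l).Nodup := by
          intro hnd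
          have := hnd.length_le_card
          rw [List.length_cons, hl] at this
          omega
        obtain ⟨s, x, t, u, hdec⟩ := exists_dup_decomp _ hnd
        have hsplice : vprod R (a :: l ++ [b]) ≤ vprod R (s ++ x :: (u ++ [b])) := by
          have : a :: l ++ [b] = s ++ x :: (t ++ x :: (u ++ [b])) := by
            rw [show a :: l ++ [b] = (a :: l) ++ [b] from rfl, hdec]
            simp
          rw [this]
          exact vprod_splice R s x t (u ++ [b])
        -- rewrite the spliced list in the canonical form
        cases s with
        | nil =>
            have hax : a = x := by
              have : a :: l = x :: t ++ x :: u := by simpa using hdec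
              exact (List.cons.injEq _ _ _ _).mp this |>.1
            subst hax
            have hlen : u.length < n := by
              have : l = t ++ a :: u := by
                have : a :: l = a :: t ++ a :: u := by simpa using hdec
                simpa using this
              have := congrArg List.length this
              simp at this
              omega
            calc vprod R (a :: l ++ [b]) ≤ vprod R ([] ++ a :: (u ++ [b])) := hsplice
              _ = vprod R (a :: u ++ [b]) := by simp
              _ ≤ rpow R (Fintype.card A) a b := ih u.length hlen u rfl a b
        | cons a' s' =>
            have haa' : a = a' := by
              have : a :: l = a' :: (s' ++ x :: t ++ x :: u) := by simpa using hdec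
              exact (List.cons.injEq _ _ _ _).mp this |>.1
            subst haa'
            have hl' : l = s' ++ x :: t ++ x :: u := by
              have : a :: l = a :: (s' ++ x :: t ++ x :: u) := by simpa using hdec
              simpa using this
            have hlen : (s' ++ x :: u).length < n := by
              have := congrArg List.length hl'
              simp at this
              simp
              omega
            calc vprod R (a :: l ++ [b]) ≤ vprod R ((a :: s') ++ x :: (u ++ [b])) := hsplice
              _ = vprod R (a :: (s' ++ x :: u) ++ [b]) := by simp
              _ ≤ rpow R (Fintype.card A) a b := ih _ hlen (s' ++ x :: u) rfl a b

lemma rpow_rep (R : A → A → L) :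
    ∀ (n : ℕ) (a b : A), rpow R (n+1) a b
      = (Finset.univ : Finset (Fin n → A)).sup fun p => vprod R (a :: List.ofFn p ++ [b]) := by
  intro n
  induction n with
  | zero =>
      intro a b
      rw [rpow_one]
      apply le_antisymm
      · have := Finset.le_sup (f := fun p : Fin 0 → A => vprod R (a :: List.ofFn p ++ [b]))
          (Finset.mem_univ (fun i => a))
        simpa [vprod_pair] using this
      · apply Finset.sup_le
        intro p _
        simp [vprod_pair]
  | succ n ih =>
      intro a b
      rw [rpow_succ]
      have hterm : ∀ c, rpow R (n+1) a c * R c b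
          = Finset.univ.sup fun p : Fin n → A =>
              vprod R (a :: (List.ofFn p ++ [c]) ++ [b]) := by
        intro c
        rw [ih a c, ILM.finset_sup_mul]
        congr 1; funext p
        have : vprod R ((a :: List.ofFn p) ++ c :: [b])
            = vprod R ((a :: List.ofFn p) ++ [c]) * vprod R (c :: [b]) :=
          vprod_glue R c [b] (a :: List.ofFn p)
        rw [vprod_pair] at this
        calc vprod R (a :: List.ofFn p ++ [c]) * R c b
            = vprod R ((a :: List.ofFn p) ++ [c]) * vprod R [c, b] := by rw [vprod_pair]
          _ = vprod R ((a :: List.ofFn p) ++ c :: [b]) := (vprod_glue R c [b] _).symm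
          _ = vprod R (a :: (List.ofFn p ++ [c]) ++ [b]) := by simp
      simp only [hterm]
      apply le_antisymm
      · apply Finset.sup_le
        intro c _
        apply Finset.sup_le
        intro p _
        have key : List.ofFn (Fin.snoc p c : Fin (n+1) → A) = List.ofFn p ++ [c] := by
          rw [List.ofFn_succ']
          simp [Fin.snoc_castSucc, List.concat_eq_append]
        refine le_trans (le_of_eq ?_) (Finset.le_sup
          (f := fun q : Fin (n+1) → A => vprod R (a :: List.ofFn q ++ [b]))
          (Finset.mem_univ (Fin.snoc p c)))
        show vprod R (a :: (List.ofFn p ++ [c]) ++ [b])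
          = vprod R (a :: List.ofFn (Fin.snoc p c) ++ [b])
        rw [key]
      · apply Finset.sup_le
        intro q _
        have key : List.ofFn q = List.ofFn (fun i : Fin n => q i.castSucc) ++ [q (Fin.last n)] := by
          rw [List.ofFn_succ']
          simp [List.concat_eq_append]
        calc vprod R (a :: List.ofFn q ++ [b])
            = vprod R (a :: (List.ofFn (fun i : Fin n => q i.castSucc) ++ [q (Fin.last n)]) ++ [b]) := by
              rw [← key]
          _ ≤ _ := by
              refine le_trans (Finset.le_sup (f := fun p : Fin n → A =>
                vprod R (a :: (List.ofFn p ++ [q (Fin.last n)]) ++ [b]))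
                (Finset.mem_univ (fun i : Fin n => q i.castSucc))) ?_
              exact Finset.le_sup (f := fun c => Finset.univ.sup fun p : Fin n → A =>
                vprod R (a :: (List.ofFn p ++ [c]) ++ [b])) (Finset.mem_univ (q (Fin.last n)))

lemma rpow_le_card {R : A → A → L} (hrefl : ∀ a, R a a = 1) (n : ℕ) (a b : A) :
    rpow R n a b ≤ rpow R (Fintype.card A) a b := by
  cases n with
  | zero => exact rpow_mono hrefl (Nat.zero_le _) a b
  | succ n =>
      rw [rpow_rep]
      apply Finset.sup_le
      intro p _
      exact vprod_le_rpow_card hrefl (List.ofFn p).length _ rfl a b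

end Fz

lemma ILM.reassoc {L : Type*} [IntegralLMonoid L] {P D : L} (hPD : P * D = D * P)
    (x Q : L) : (x * P) * (D * Q) = (x * D) * (P * Q) := by
  rw [mul_assoc, mul_assoc, ← mul_assoc P D Q, hPD, mul_assoc]

namespace Fz

variable {L : Type*} [IntegralLMonoid L] {X Y A : Type*} [Fintype A] [Fintype Y]

lemma step_le_Rstep (φY : Y → L) (δ : A → X ⊕ Y → A → L) (y : Y) (a b : A) :
    φY y * δ a (Sum.inr y) b ≤ Rstep φY δ a b := by
  unfold Rstep
  by_cases h : a = b
  · rw [if_pos h]; exact ILM.le_one _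
  · rw [if_neg h]
    exact Finset.le_sup (f := fun y : Y => φY y * δ a (Sum.inr y) b) (Finset.mem_univ y)

lemma chain_le_rpow (φY : Y → L) {δ : A → X ⊕ Y → A → L}
    (hδ : ∀ a z b, Crisp (δ a z b)) :
    ∀ (w : List Y) (a b : A),
      phiStar φY ((w.map Sum.inr : List (X ⊕ Y))) * dstar δ a (w.map Sum.inr) b
        ≤ rpow (Rstep φY δ) w.length a b := by
  intro w
  induction w with
  | nil =>
      intro a b
      apply le_of_eq
      rw [List.map_nil, phiStar_nil, one_mul, dstar_nil, List.length_nil, rpow_zero]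
  | cons y t ih =>
      intro a b
      rw [List.map_cons, phiStar_cons_inr, dstar_cons, ILM.mul_finset_sup]
      apply Finset.sup_le
      intro c _
      have hre : (φY y * phiStar φY ((t.map Sum.inr : List (X ⊕ Y)))) *
          (δ a (Sum.inr y) c * dstar δ c (t.map Sum.inr) b)
          = (φY y * δ a (Sum.inr y) c) *
            (phiStar φY ((t.map Sum.inr : List (X ⊕ Y))) * dstar δ c (t.map Sum.inr) b) :=
        ILM.reassoc (Crisp.comm (hδ a (Sum.inr y) c) _).symm _ _
      rw [hre]
      calc (φY y * δ a (Sum.inr y) c) *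
            (phiStar φY ((t.map Sum.inr : List (X ⊕ Y))) * dstar δ c (t.map Sum.inr) b)
          ≤ Rstep φY δ a c * rpow (Rstep φY δ) t.length c b :=
            ILM.mul_le_mul (step_le_Rstep φY δ y a c) (ih c b)
        _ ≤ rpow (Rstep φY δ) (1 + t.length) a b := by
            rw [rpow_one_add]
            exact Finset.le_sup (f := fun d => Rstep φY δ a d * rpow (Rstep φY δ) t.length d b)
              (Finset.mem_univ c)
        _ = rpow (Rstep φY δ) (y :: t).length a b := by
            rw [List.length_cons, Nat.add_comm]

lemma Rstep_refl (φY : Y → L) (δ : A → X ⊕ Y → A → L) (a : A) :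
    Rstep φY δ a a = 1 := if_pos rfl

/-- P2 : any `Y`-word contributes at most `R_A`. -/
lemma phiStar_dstar_le_RA (φY : Y → L) {δ : A → X ⊕ Y → A → L}
    (hδ : ∀ a z b, Crisp (δ a z b)) (w : List Y) (a b : A) :
    phiStar φY ((w.map Sum.inr : List (X ⊕ Y))) * dstar δ a (w.map Sum.inr) b
      ≤ RA φY δ a b :=
  le_trans (chain_le_rpow φY hδ w a b)
    (rpow_le_card (Rstep_refl φY δ) w.length a b)

/-- RA1 : `rpow (Rstep) n` is bounded by a finite sup of `Y`-word contributions. -/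
lemma rpow_le_wordSup (φY : Y → L) {δ : A → X ⊕ Y → A → L}
    (hδ : ∀ a z b, Crisp (δ a z b)) :
    ∀ (n : ℕ) (a b : A), ∃ F : Finset (List Y),
      rpow (Rstep φY δ) n a b
        ≤ F.sup fun w => phiStar φY ((w.map Sum.inr : List (X ⊕ Y)))
            * dstar δ a (w.map Sum.inr) b := by
  intro n
  induction n with
  | zero =>
      intro a b
      refine ⟨{[]}, ?_⟩
      rw [Finset.sup_singleton, List.map_nil, phiStar_nil, one_mul, dstar_nil, rpow_zero]
  | succ n ih =>
      intro a b
      -- choose witness finsets for each intermediate state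
      choose Fc hFc using fun c => ih a c
      classical
      refine ⟨Finset.univ.biUnion (fun c : A =>
        Fc c ∪ (Fc c).biUnion (fun w => Finset.univ.image (fun y : Y => w ++ [y]))), ?_⟩
      set G := Finset.univ.biUnion (fun c : A =>
        Fc c ∪ (Fc c).biUnion (fun w => Finset.univ.image (fun y : Y => w ++ [y]))) with hG
      have memG1 : ∀ (c : A) (w : List Y), w ∈ Fc c → w ∈ G := by
        intro c w hw
        rw [hG, Finset.mem_biUnion]
        exact ⟨c, Finset.mem_univ c, Finset.mem_union_left _ hw⟩
      have memG2 : ∀ (c : A) (w : List Y) (y : Y), w ∈ Fc c → w ++ [y] ∈ G := by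
        intro c w y hw
        rw [hG, Finset.mem_biUnion]
        refine ⟨c, Finset.mem_univ c, Finset.mem_union_right _ ?_⟩
        rw [Finset.mem_biUnion]
        exact ⟨w, hw, Finset.mem_image.mpr ⟨y, Finset.mem_univ y, rfl⟩⟩
      set Φ := fun w : List Y => phiStar φY ((w.map Sum.inr : List (X ⊕ Y)))
          * dstar δ a (w.map Sum.inr) b
        with hΦ
      rw [rpow_succ]
      apply Finset.sup_le
      intro c _
      calc rpow (Rstep φY δ) n a c * Rstep φY δ c b
          ≤ ((Fc c).sup fun w => phiStar φY ((w.map Sum.inr : List (X ⊕ Y))) * dstar δ a (w.map Sum.inr) c)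
              * Rstep φY δ c b := ILM.mul_le_mul_right (hFc c) _
        _ = (Fc c).sup (fun w =>
              (phiStar φY ((w.map Sum.inr : List (X ⊕ Y))) * dstar δ a (w.map Sum.inr) c) * Rstep φY δ c b) :=
            ILM.finset_sup_mul _ _ _
        _ ≤ G.sup Φ := by
            apply Finset.sup_le
            intro w hw
            by_cases hcb : c = b
            · subst hcb
              calc (phiStar φY ((w.map Sum.inr : List (X ⊕ Y))) * dstar δ a (w.map Sum.inr) c) * Rstep φY δ c c
                  = Φ w := by rw [Rstep_refl, mul_one, hΦ]
                _ ≤ G.sup Φ := Finset.le_sup (memG1 c w hw)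
            · rw [Rstep, if_neg hcb, ILM.mul_finset_sup]
              apply Finset.sup_le
              intro y _
              have hre : (phiStar φY ((w.map Sum.inr : List (X ⊕ Y))) * dstar δ a (w.map Sum.inr) c) *
                  (φY y * δ c (Sum.inr y) b)
                  = (phiStar φY ((w.map Sum.inr : List (X ⊕ Y))) * φY y) *
                    (dstar δ a (w.map Sum.inr) c * δ c (Sum.inr y) b) :=
                ILM.reassoc (Crisp.comm (dstar_crisp hδ a (w.map Sum.inr) c) _) _ _
              rw [hre]
              have h1 : phiStar φY ((w.map Sum.inr : List (X ⊕ Y))) * φY y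
                  = phiStar φY (((w ++ [y]).map Sum.inr : List (X ⊕ Y))) := by
                rw [List.map_append, phiStar_append, List.map_singleton,
                  phiStar_cons_inr, phiStar_nil, mul_one]
              have h2 : dstar δ a (w.map Sum.inr) c * δ c (Sum.inr y) b
                  ≤ dstar δ a ((w ++ [y]).map Sum.inr) b := by
                rw [List.map_append, List.map_singleton, dstar_snoc]
                exact Finset.le_sup (f := fun d =>
                  dstar δ a (w.map Sum.inr) d * δ d (Sum.inr y) b) (Finset.mem_univ c)
              calc (phiStar φY ((w.map Sum.inr : List (X ⊕ Y))) * φY y) *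
                    (dstar δ a (w.map Sum.inr) c * δ c (Sum.inr y) b)
                  ≤ phiStar φY (((w ++ [y]).map Sum.inr : List (X ⊕ Y))) *
                      dstar δ a ((w ++ [y]).map Sum.inr) b := by
                    rw [h1]; exact ILM.mul_le_mul_left h2 _
                _ ≤ G.sup Φ := Finset.le_sup (f := Φ) (memG2 c w y hw)

end Fz

section FpowLemmas

variable {L : Type*} [IntegralLMonoid L] {X : Type*}

open Fz

lemma fpow_succ (f : List X → L) (n : ℕ) : fpow f (n+1) = fconcat (fpow f n) f := rfl

lemma fpow_le_rangeSup (f : List X → L) :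
    ∀ (n : ℕ) (u : List X),
      fpow f n u ≤ (Finset.range (u.length + 1)).sup fun m => fpow f m u := by
  intro n
  induction n using Nat.strong_induction_on with
  | _ n ih =>
      intro u
      rcases Nat.lt_or_ge n (u.length + 1) with h | h
      · exact Finset.le_sup (f := fun m => fpow f m u) (Finset.mem_range.mpr h)
      · obtain ⟨k, rfl⟩ : ∃ k, n = k + 1 := ⟨n - 1, by omega⟩
        have hunf : fpow f (k+1) u = (Finset.range (u.length + 1)).sup
            (fun i => fpow f k (u.take i) * f (u.drop i)) := rfl
        rw [hunf]
        apply Finset.sup_le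
        intro i hi
        rw [Finset.mem_range] at hi
        by_cases hiu : i = u.length
        · subst hiu
          rw [List.take_length, List.drop_length]
          calc fpow f k u * f [] ≤ fpow f k u * 1 := ILM.mul_le_mul_left (ILM.le_one _) _
            _ = fpow f k u := mul_one _
            _ ≤ _ := ih k (by omega) u
        · have hilt : i < u.length := by omega
          have htl : (u.take i).length = i := by
            rw [List.length_take]; omega
          calc fpow f k (u.take i) * f (u.drop i)
              ≤ ((Finset.range ((u.take i).length + 1)).sup fun m => fpow f m (u.take i))
                  * f (u.drop i) := ILM.mul_le_mul_right (ih k (by omega) (u.take i)) _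
            _ = (Finset.range ((u.take i).length + 1)).sup
                  (fun m => fpow f m (u.take i) * f (u.drop i)) := ILM.finset_sup_mul _ _ _
            _ ≤ (Finset.range (u.length + 1)).sup fun m => fpow f m u := by
                apply Finset.sup_le
                intro m hm
                rw [Finset.mem_range] at hm
                have hmi : m ≤ i := by omega
                have step : fpow f m (u.take i) * f (u.drop i) ≤ fpow f (m+1) u := by
                  rw [fpow_succ]
                  exact Finset.le_sup (f := fun j => fpow f m (u.take j) * f (u.drop j))
                    (Finset.mem_range.mpr (by omega))
                exact le_trans step (Finset.le_sup (f := fun m => fpow f m u)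
                  (Finset.mem_range.mpr (by omega)))

lemma listProd_le_fpow (f : List X → L) :
    ∀ us : List (List X), (us.map f).prod ≤ fpow f us.length us.flatten := by
  intro us
  induction us using List.reverseRecOn with
  | nil => simp [fpow]
  | append_singleton ts t ih =>
      rw [List.map_append, List.prod_append, List.map_singleton, List.prod_singleton]
      have hjoin : (ts ++ [t]).flatten = ts.flatten ++ t := by simp
      have hlen : (ts ++ [t]).length = ts.length + 1 := by simp
      rw [hjoin, hlen, fpow_succ]
      have hidx : ts.flatten.length ∈ Finset.range ((ts.flatten ++ t).length + 1) := by
        rw [Finset.mem_range, List.length_append]; omega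
      calc (ts.map f).prod * f t
          ≤ fpow f ts.length ts.flatten * f t := ILM.mul_le_mul_right ih _
        _ = fpow f ts.length ((ts.flatten ++ t).take ts.flatten.length)
              * f ((ts.flatten ++ t).drop ts.flatten.length) := by
            rw [List.take_left, List.drop_left]
        _ ≤ _ := Finset.le_sup (f := fun i =>
            fpow f ts.length ((ts.flatten ++ t).take i) * f ((ts.flatten ++ t).drop i)) hidx

end FpowLemmas

namespace Fz

variable {L : Type*} [IntegralLMonoid L] {X Y : Type*}

lemma phiStar_flatten (φY : Y → L) (S : List (List (X ⊕ Y))) :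
    phiStar φY S.flatten = (S.map (phiStar φY)).prod := by
  induction S with
  | nil => simp [phiStar_nil]
  | cons v S ih => rw [List.flatten_cons, phiStar_append, List.map_cons, List.prod_cons, ih]

lemma prod_map_le {I : Type*} (S : List I) (p q : I → L)
    (h : ∀ s ∈ S, p s ≤ q s) : (S.map p).prod ≤ (S.map q).prod := by
  induction S with
  | nil => simp
  | cons s S ih =>
      rw [List.map_cons, List.map_cons, List.prod_cons, List.prod_cons]
      exact ILM.mul_le_mul (h s List.mem_cons_self)
        (ih fun x hx => h x (List.mem_cons_of_mem s hx))

lemma UY_flatten {S : List (List (X ⊕ Y))} :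
    S.flatten.filterMap (fun z => z.getLeft?)
      = (S.map (List.filterMap (fun z => z.getLeft?))).flatten :=
  List.filterMap_flatten

/-- The main lemma, by structural induction on the fuzzy regular expression:
`f u` is both an upper bound of, and a finite sub-sup of, the values `φ*(v)`
over `v ∈ U_Y(u) ∩ ‖β_R‖`. -/
lemma mainLemma (sc : L → Y) (φY : Y → L) {β : FRE X L} {f : List X → L}
    (hf : IsNorm β f) :
    (∀ l ∈ β.scalars, φY (sc l) = l) →
    ∀ u : List X,
      (∀ v ∈ UY Y u, v ∈ (toReg sc β).matches' → phiStar φY v ≤ f u) ∧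
      (∃ F : Finset (List (X ⊕ Y)),
        (∀ v ∈ F, v ∈ UY Y u ∧ v ∈ (toReg sc β).matches') ∧
        f u ≤ F.sup (phiStar φY)) := by
  induction hf with
  | zero =>
      intro _ u
      constructor
      · intro v _ hv
        rw [show toReg sc (FRE.zero : FRE X L) = 0 from rfl,
          RegularExpression.matches'_zero] at hv
        exact (Language.notMem_zero v hv).elim
      · exact ⟨∅, by simp, by simp⟩
  | eps =>
      intro _ u
      have hm : ∀ v : List (X ⊕ Y), v ∈ (toReg sc (FRE.eps : FRE X L)).matches' ↔ v = [] := by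
        intro v
        rw [show toReg sc (FRE.eps : FRE X L) = 1 from rfl,
          RegularExpression.matches'_epsilon]
        exact Language.mem_one v
      constructor
      · intro v hvU hv
        rw [hm v] at hv
        subst hv
        rw [mem_UY] at hvU
        simp only [List.filterMap_nil] at hvU
        rw [← hvU]
        simp [phiStar_nil]
      · by_cases hu : u = []
        · subst hu
          refine ⟨{[]}, ?_, ?_⟩
          · intro v hv
            rw [Finset.mem_singleton] at hv
            subst hv
            exact ⟨by rw [mem_UY]; rfl, (hm []).mpr rfl⟩
          · simp [phiStar_nil]
        · exact ⟨∅, by simp, by simp [hu]⟩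
  | char x =>
      intro _ u
      have hm : ∀ v : List (X ⊕ Y),
          v ∈ (toReg sc (FRE.char x : FRE X L)).matches' ↔ v = [Sum.inl x] := by
        intro v
        rw [show toReg sc (FRE.char x : FRE X L) = RegularExpression.char (Sum.inl x)
          from rfl, RegularExpression.matches'_char]
        rfl
      constructor
      · intro v hvU hv
        rw [hm v] at hv
        subst hv
        rw [mem_UY] at hvU
        simp [List.filterMap_cons, Sum.getLeft?] at hvU
        rw [← hvU]
        simp [phiStar_cons_inl, phiStar_nil]
      · by_cases hu : u = [x]
        · subst hu
          refine ⟨{[Sum.inl x]}, ?_, ?_⟩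
          · intro v hv
            rw [Finset.mem_singleton] at hv
            subst hv
            refine ⟨?_, (hm _).mpr rfl⟩
            rw [mem_UY]
            simp [List.filterMap_cons, Sum.getLeft?]
          · simp [phiStar_cons_inl, phiStar_nil]
        · exact ⟨∅, by simp, by simp [hu]⟩
  | smul lam hβ ih =>
      rename_i β' f1
      intro hφ u
      have hlam : φY (sc lam) = lam := hφ lam (by simp [FRE.scalars])
      have hφβ : ∀ l ∈ β'.scalars, φY (sc l) = l := fun l hl =>
        hφ l (by simp [FRE.scalars]; right; exact hl)
      have ihu := ih hφβ u
      have ub := ihu.1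
      obtain ⟨F1, hF1, hrep⟩ := ihu.2
      have hm : ∀ v : List (X ⊕ Y),
          v ∈ (toReg sc (FRE.smul lam β')).matches' ↔
            ∃ q, q ∈ (toReg sc β').matches' ∧ v = Sum.inr (sc lam) :: q := by
        intro v
        rw [show toReg sc (FRE.smul lam β')
            = RegularExpression.char (Sum.inr (sc lam)) * toReg sc β' from rfl,
          RegularExpression.matches'_mul, Language.mem_mul]
        constructor
        · rintro ⟨a, ha, b, hb, rfl⟩
          rw [RegularExpression.matches'_char] at ha
          have : a = [Sum.inr (sc lam)] := ha
          subst this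
          exact ⟨b, hb, rfl⟩
        · rintro ⟨q, hq, rfl⟩
          exact ⟨[Sum.inr (sc lam)], by rw [RegularExpression.matches'_char]; rfl, q, hq, rfl⟩
      constructor
      · intro v hvU hv
        obtain ⟨q, hq, rfl⟩ := (hm v).mp hv
        have hqU : q ∈ UY Y u := by
          rw [mem_UY] at hvU ⊢
          rw [← hvU, List.filterMap_cons]
          rfl
        rw [phiStar_cons_inr, hlam]
        exact ILM.mul_le_mul_left (ub q hqU hq) lam
      · refine ⟨F1.image (Sum.inr (sc lam) :: ·), ?_, ?_⟩
        · intro v hv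
          rw [Finset.mem_image] at hv
          obtain ⟨q, hq, rfl⟩ := hv
          obtain ⟨hqU, hqm⟩ := hF1 q hq
          refine ⟨?_, (hm _).mpr ⟨q, hqm, rfl⟩⟩
          rw [mem_UY] at hqU ⊢
          rw [List.filterMap_cons]
          exact hqU
        · rw [Finset.sup_image]
          calc lam * f1 u ≤ lam * F1.sup (phiStar φY) := ILM.mul_le_mul_left hrep lam
            _ = F1.sup (fun q => lam * phiStar φY q) := ILM.mul_finset_sup _ _ _
            _ = F1.sup ((phiStar φY) ∘ (Sum.inr (sc lam) :: ·)) := by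
                congr 1; funext q
                rw [Function.comp_apply, phiStar_cons_inr, hlam]
  | plus hβ hγ ih1 ih2 =>
      rename_i β' γ' f1 f2
      intro hφ u
      have hφ1 : ∀ l ∈ β'.scalars, φY (sc l) = l := fun l hl =>
        hφ l (by simp [FRE.scalars]; left; exact hl)
      have hφ2 : ∀ l ∈ γ'.scalars, φY (sc l) = l := fun l hl =>
        hφ l (by simp [FRE.scalars]; right; exact hl)
      have hm : ∀ v : List (X ⊕ Y),
          v ∈ (toReg sc (FRE.plus β' γ')).matches' ↔
            v ∈ (toReg sc β').matches' ∨ v ∈ (toReg sc γ').matches' := by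
        intro v
        rw [show toReg sc (FRE.plus β' γ') = toReg sc β' + toReg sc γ' from rfl,
          RegularExpression.matches'_add]
        exact Iff.rfl
      constructor
      · intro v hvU hv
        rcases (hm v).mp hv with h | h
        · exact le_trans ((ih1 hφ1 u).1 v hvU h) le_sup_left
        · exact le_trans ((ih2 hφ2 u).1 v hvU h) le_sup_right
      · obtain ⟨F1, hF1, hrep1⟩ := (ih1 hφ1 u).2
        obtain ⟨F2, hF2, hrep2⟩ := (ih2 hφ2 u).2
        refine ⟨F1 ∪ F2, ?_, ?_⟩
        · intro v hv
          rcases Finset.mem_union.mp hv with h | h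
          · exact ⟨(hF1 v h).1, (hm v).mpr (Or.inl (hF1 v h).2)⟩
          · exact ⟨(hF2 v h).1, (hm v).mpr (Or.inr (hF2 v h).2)⟩
        · rw [Finset.sup_union]
          exact sup_le_sup hrep1 hrep2
  | comp hβ hγ ih1 ih2 =>
      rename_i β' γ' f1 f2
      intro hφ u
      have hφ1 : ∀ l ∈ β'.scalars, φY (sc l) = l := fun l hl =>
        hφ l (by simp [FRE.scalars]; left; exact hl)
      have hφ2 : ∀ l ∈ γ'.scalars, φY (sc l) = l := fun l hl =>
        hφ l (by simp [FRE.scalars]; right; exact hl)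
      have hm : ∀ v : List (X ⊕ Y),
          v ∈ (toReg sc (FRE.comp β' γ')).matches' ↔
            ∃ a ∈ (toReg sc β').matches', ∃ b ∈ (toReg sc γ').matches', a ++ b = v := by
        intro v
        rw [show toReg sc (FRE.comp β' γ') = toReg sc β' * toReg sc γ' from rfl,
          RegularExpression.matches'_mul]
        exact Language.mem_mul
      constructor
      · intro v hvU hv
        obtain ⟨v1, h1, v2, h2, rfl⟩ := (hm v).mp hv
        set u1 := v1.filterMap (fun z => z.getLeft?) with hu1
        set u2 := v2.filterMap (fun z => z.getLeft?) with hu2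
        have hu : u = u1 ++ u2 := by
          rw [mem_UY] at hvU
          rw [← hvU, List.filterMap_append]
        have hb1 : phiStar φY v1 ≤ f1 u1 := (ih1 hφ1 u1).1 v1 (by rw [mem_UY]) h1
        have hb2 : phiStar φY v2 ≤ f2 u2 := (ih2 hφ2 u2).1 v2 (by rw [mem_UY]) h2
        rw [phiStar_append]
        calc phiStar φY v1 * phiStar φY v2 ≤ f1 u1 * f2 u2 := ILM.mul_le_mul hb1 hb2
          _ = f1 (u.take u1.length) * f2 (u.drop u1.length) := by
              rw [hu, List.take_left, List.drop_left]
          _ ≤ fconcat f1 f2 u := by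
              apply Finset.le_sup (f := fun i => f1 (u.take i) * f2 (u.drop i))
              rw [Finset.mem_range, hu, List.length_append]
              omega
      · choose Frep hFrep using fun i : ℕ => (ih1 hφ1 (u.take i)).2
        choose Grep hGrep using fun i : ℕ => (ih2 hφ2 (u.drop i)).2
        classical
        refine ⟨(Finset.range (u.length + 1)).biUnion (fun i =>
          (Frep i).biUnion fun v1 => (Grep i).image (v1 ++ ·)), ?_, ?_⟩
        · intro v hv
          rw [Finset.mem_biUnion] at hv
          obtain ⟨i, _, hv⟩ := hv
          rw [Finset.mem_biUnion] at hv
          obtain ⟨v1, hv1, hv⟩ := hv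
          rw [Finset.mem_image] at hv
          obtain ⟨v2, hv2, rfl⟩ := hv
          obtain ⟨hv1U, hv1m⟩ := (hFrep i).1 v1 hv1
          obtain ⟨hv2U, hv2m⟩ := (hGrep i).1 v2 hv2
          constructor
          · have := UY_append hv1U hv2U
            rwa [List.take_append_drop] at this
          · exact (hm _).mpr ⟨v1, hv1m, v2, hv2m, rfl⟩
        · show fconcat f1 f2 u ≤ _
          apply Finset.sup_le
          intro i hi
          calc f1 (u.take i) * f2 (u.drop i)
              ≤ (Frep i).sup (phiStar φY) * (Grep i).sup (phiStar φY) :=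
                ILM.mul_le_mul (hFrep i).2 (hGrep i).2
            _ = (Frep i).sup (fun v1 => phiStar φY v1 * (Grep i).sup (phiStar φY)) :=
                ILM.finset_sup_mul _ _ _
            _ ≤ _ := by
                apply Finset.sup_le
                intro v1 hv1
                rw [ILM.mul_finset_sup]
                apply Finset.sup_le
                intro v2 hv2
                rw [← phiStar_append]
                refine le_trans (le_of_eq rfl) ?_
                apply Finset.le_sup
                rw [Finset.mem_biUnion]
                refine ⟨i, hi, ?_⟩
                rw [Finset.mem_biUnion]
                exact ⟨v1, hv1, Finset.mem_image.mpr ⟨v2, hv2, rfl⟩⟩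
  | star hβ hlub ih =>
      rename_i β' f1 g
      intro hφ u
      have hφ1 : ∀ l ∈ β'.scalars, φY (sc l) = l := hφ
      have hm : ∀ v : List (X ⊕ Y),
          v ∈ (toReg sc (FRE.star β')).matches' ↔
            v ∈ KStar.kstar (toReg sc β').matches' := by
        intro v
        rw [show toReg sc (FRE.star β') = (toReg sc β').star from rfl,
          RegularExpression.matches'_star]
      constructor
      · intro v hvU hv
        obtain ⟨S, rfl, hS⟩ := Language.mem_kstar.mp ((hm v).mp hv)
        set us : List (List X) := S.map (List.filterMap (fun z => z.getLeft?)) with hus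
        have huu : u = us.flatten := by
          rw [mem_UY] at hvU
          rw [← hvU, UY_flatten]
        have h1 : phiStar φY S.flatten = (S.map (phiStar φY)).prod := phiStar_flatten φY S
        have h2 : (S.map (phiStar φY)).prod
            ≤ (S.map (fun s => f1 (s.filterMap (fun z => z.getLeft?)))).prod := by
          apply prod_map_le
          intro s hs
          exact (ih hφ1 _).1 s (by rw [mem_UY]) (hS s hs)
        have h3 : (S.map (fun s => f1 (s.filterMap (fun z => z.getLeft?)))).prod
            = (us.map f1).prod := by rw [hus, List.map_map]; rfl
        have h4 : (us.map f1).prod ≤ fpow f1 us.length us.flatten :=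
          listProd_le_fpow f1 us
        have h5 : fpow f1 us.length us.flatten ≤ g u := by
          rw [← huu]
          exact (hlub u).1 ⟨us.length, rfl⟩
        rw [h1]
        exact le_trans h2 (le_trans (le_of_eq h3) (le_trans h4 h5))
      · -- finite representation for the star
        have star_rep : ∀ (n : ℕ) (w : List X), ∃ F : Finset (List (X ⊕ Y)),
            (∀ v ∈ F, v ∈ UY Y w ∧ v ∈ KStar.kstar (toReg sc β').matches') ∧
            fpow f1 n w ≤ F.sup (phiStar φY) := by
          intro n
          induction n with
          | zero =>
              intro w
              by_cases hw : w = []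
              · subst hw
                refine ⟨{[]}, ?_, ?_⟩
                · intro v hv
                  rw [Finset.mem_singleton] at hv
                  subst hv
                  exact ⟨by rw [mem_UY]; rfl, Language.nil_mem_kstar _⟩
                · show (if ([] : List X) = [] then (1:L) else ⊥) ≤ _
                  simp [phiStar_nil]
              · refine ⟨∅, by simp, ?_⟩
                show (if w = [] then (1:L) else ⊥) ≤ _
                simp [hw]
          | succ n ihn =>
              intro w
              choose Fn hFn using fun i : ℕ => ihn (w.take i)
              choose Gn hGn using fun i : ℕ => (ih hφ1 (w.drop i)).2
              classical
              refine ⟨(Finset.range (w.length + 1)).biUnion (fun i =>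
                (Fn i).biUnion fun v1 => (Gn i).image (v1 ++ ·)), ?_, ?_⟩
              · intro v hv
                rw [Finset.mem_biUnion] at hv
                obtain ⟨i, _, hv⟩ := hv
                rw [Finset.mem_biUnion] at hv
                obtain ⟨v1, hv1, hv⟩ := hv
                rw [Finset.mem_image] at hv
                obtain ⟨v2, hv2, rfl⟩ := hv
                obtain ⟨hv1U, hv1m⟩ := (hFn i).1 v1 hv1
                obtain ⟨hv2U, hv2m⟩ := (hGn i).1 v2 hv2
                constructor
                · have := UY_append hv1U hv2U
                  rwa [List.take_append_drop] at this
                · obtain ⟨S, rfl, hS⟩ := Language.mem_kstar.mp hv1m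
                  have : S.flatten ++ v2 = (S ++ [v2]).flatten := by
                    rw [List.flatten_append]; simp
                  rw [this]
                  apply Language.join_mem_kstar
                  intro y hy
                  rcases List.mem_append.mp hy with h | h
                  · exact hS y h
                  · rw [List.mem_singleton] at h; subst h; exact hv2m
              · show fconcat (fpow f1 n) f1 w ≤ _
                apply Finset.sup_le
                intro i hi
                calc fpow f1 n (w.take i) * f1 (w.drop i)
                    ≤ (Fn i).sup (phiStar φY) * (Gn i).sup (phiStar φY) :=
                      ILM.mul_le_mul (hFn i).2 (hGn i).2
                  _ = (Fn i).sup (fun v1 => phiStar φY v1 * (Gn i).sup (phiStar φY)) :=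
                      ILM.finset_sup_mul _ _ _
                  _ ≤ _ := by
                      apply Finset.sup_le
                      intro v1 hv1
                      rw [ILM.mul_finset_sup]
                      apply Finset.sup_le
                      intro v2 hv2
                      rw [← phiStar_append]
                      apply Finset.le_sup
                      rw [Finset.mem_biUnion]
                      refine ⟨i, hi, ?_⟩
                      rw [Finset.mem_biUnion]
                      exact ⟨v1, hv1, Finset.mem_image.mpr ⟨v2, hv2, rfl⟩⟩
        choose Fs hFs using fun n : ℕ => star_rep n u
        classical
        refine ⟨(Finset.range (u.length + 1)).biUnion Fs, ?_, ?_⟩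
        · intro v hv
          rw [Finset.mem_biUnion] at hv
          obtain ⟨n, _, hv⟩ := hv
          exact ⟨((hFs n).1 v hv).1, (hm v).mpr ((hFs n).1 v hv).2⟩
        · have hub : g u ≤ (Finset.range (u.length + 1)).sup (fun m => fpow f1 m u) := by
            apply (hlub u).2
            rintro l ⟨n, rfl⟩
            exact fpow_le_rangeSup f1 n u
          refine le_trans hub ?_
          apply Finset.sup_le
          intro n hn
          refine le_trans (hFs n).2 ?_
          apply Finset.sup_mono
          intro v hv
          rw [Finset.mem_biUnion]
          exact ⟨n, hn, hv⟩

end Fz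

namespace Fz

section Automata

variable {L X Y A : Type*} [IntegralLMonoid L] [Fintype Y] [Fintype A]

variable (φY : Y → L)

/-- elementary rearrangement for the soundness direction -/
lemma soundStep {δ : A → X ⊕ Y → A → L} (hδc : ∀ a z b, Crisp (δ a z b))
    (p c r q : A) (x : X) (w : List Y) (v : List (X ⊕ Y)) :
    ((phiStar φY ((w.map Sum.inr : List (X ⊕ Y))) * dstar δ p (w.map Sum.inr) c)
        * δ c (Sum.inl x) r) * (phiStar φY v * dstar δ r v q)
      ≤ phiStar φY ((w.map Sum.inr : List (X ⊕ Y)) ++ Sum.inl x :: v)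
          * dstar δ p ((w.map Sum.inr : List (X ⊕ Y)) ++ Sum.inl x :: v) q := by
  set w' : List (X ⊕ Y) := w.map Sum.inr with hw'
  set P1 := phiStar φY w' with hP1
  set P2 := phiStar φY v with hP2
  set D1 := dstar δ p w' c with hD1
  set D2 := δ c (Sum.inl x) r with hD2
  set D3 := dstar δ r v q with hD3
  have hφ : phiStar φY (w' ++ Sum.inl x :: v) = P1 * P2 := by
    rw [phiStar_append, phiStar_cons_inl]
  have hcr : Crisp (D1 * D2) := Crisp.mul (dstar_crisp hδc _ _ _) (hδc _ _ _)
  have hre : ((P1 * D1) * D2) * (P2 * D3) = (P1 * P2) * ((D1 * D2) * D3) := by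
    rw [mul_assoc P1 D1 D2]
    exact ILM.reassoc (Crisp.comm hcr P2) P1 D3
  rw [hre, hφ]
  apply ILM.mul_le_mul_left
  have h1 : D1 * D2 ≤ dstar δ p (w' ++ [Sum.inl x]) r := by
    rw [dstar_snoc]
    exact Finset.le_sup (f := fun d => dstar δ p w' d * δ d (Sum.inl x) r)
      (Finset.mem_univ c)
  have h2 : dstar δ p (w' ++ [Sum.inl x]) r * D3
      ≤ dstar δ p ((w' ++ [Sum.inl x]) ++ v) q := by
    conv_rhs => rw [dstar_append]
    exact Finset.le_sup (f := fun d =>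
      dstar δ p (w' ++ [Sum.inl x]) d * dstar δ d v q) (Finset.mem_univ r)
  have h3 : (w' ++ [Sum.inl x]) ++ v = w' ++ Sum.inl x :: v := by
    rw [List.append_assoc]; rfl
  calc (D1 * D2) * D3 ≤ dstar δ p (w' ++ [Sum.inl x]) r * D3 :=
        ILM.mul_le_mul_right h1 D3
    _ ≤ dstar δ p ((w' ++ [Sum.inl x]) ++ v) q := h2
    _ = dstar δ p (w' ++ Sum.inl x :: v) q := by rw [h3]

variable (a0 : A)

lemma soundAux {δ : A → X ⊕ Y → A → L} [Fintype ↥(redStates δ a0)]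
    (hδc : ∀ a z b, Crisp (δ a z b))
    (δr : ↥(redStates δ a0) → X → ↥(redStates δ a0) → L)
    (hδr : ∀ p x q, δr p x q
      = Finset.univ.sup fun c => RA φY δ p.1 c * δ c (Sum.inl x) q.1) :
    ∀ (u : List X) (p q : ↥(redStates δ a0)), ∃ F : Finset (List (X ⊕ Y)),
      (∀ v ∈ F, v ∈ UY Y u) ∧
      dstar δr p u q ≤ F.sup (fun v => phiStar φY v * dstar δ p.1 v q.1) := by
  intro u
  induction u with
  | nil =>
      intro p q
      refine ⟨{[]}, ?_, ?_⟩
      · intro v hv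
        rw [Finset.mem_singleton] at hv; subst hv
        rw [mem_UY]; rfl
      · rw [dstar_nil, Finset.sup_singleton, phiStar_nil, one_mul, dstar_nil]
        by_cases h : p = q
        · rw [if_pos h, if_pos (congrArg Subtype.val h)]
        · rw [if_neg h]; exact bot_le
  | cons x u ihu =>
      intro p q
      rw [dstar_cons]
      choose W hW using fun (c : A) =>
        rpow_le_wordSup φY hδc (Fintype.card A) p.1 c
      choose Fr hFr using fun r : ↥(redStates δ a0) => ihu r q
      classical
      refine ⟨Finset.univ.biUnion (fun r : ↥(redStates δ a0) =>
        Finset.univ.biUnion (fun c : A =>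
          (W c).biUnion (fun w => (Fr r).image
            (fun v => (w.map Sum.inr : List (X ⊕ Y)) ++ Sum.inl x :: v)))), ?_, ?_⟩
      · intro v hv
        simp only [Finset.mem_biUnion, Finset.mem_image, Finset.mem_univ, true_and] at hv
        obtain ⟨r, c, w, _, v', hv', rfl⟩ := hv
        have h1 : (w.map Sum.inr : List (X ⊕ Y)) ∈ UY Y ([] : List X) :=
          map_inr_mem_UY_nil w
        have h2 : (Sum.inl x :: v' : List (X ⊕ Y)) ∈ UY Y (x :: u) := by
          have hv'U := (hFr r).1 v' hv'
          rw [mem_UY] at hv'U ⊢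
          have hred : List.filterMap (fun z : X ⊕ Y => z.getLeft?) (Sum.inl x :: v')
              = x :: List.filterMap (fun z : X ⊕ Y => z.getLeft?) v' := rfl
          rw [hred, hv'U]
        have := UY_append h1 h2
        simpa using this
      · apply Finset.sup_le
        intro r _
        set G := Finset.univ.biUnion (fun r : ↥(redStates δ a0) =>
          Finset.univ.biUnion (fun c : A =>
            (W c).biUnion (fun w => (Fr r).image
              (fun v => (w.map Sum.inr : List (X ⊕ Y)) ++ Sum.inl x :: v)))) with hG
        have memG : ∀ (c : A) (w : List Y) (v : List (X ⊕ Y)), w ∈ W c → v ∈ Fr r →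
            ((w.map Sum.inr : List (X ⊕ Y)) ++ Sum.inl x :: v) ∈ G := by
          intro c w v hw hv
          rw [hG]
          simp only [Finset.mem_biUnion, Finset.mem_image, Finset.mem_univ, true_and]
          exact ⟨r, c, w, hw, v, hv, rfl⟩
        calc δr p x r * dstar δr r u q
            ≤ δr p x r * (Fr r).sup (fun v => phiStar φY v * dstar δ r.1 v q.1) :=
              ILM.mul_le_mul_left (hFr r).2 _
          _ = Finset.univ.sup (fun c => (RA φY δ p.1 c * δ c (Sum.inl x) r.1)
                * (Fr r).sup (fun v => phiStar φY v * dstar δ r.1 v q.1)) := by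
              rw [hδr, ILM.finset_sup_mul]
          _ ≤ G.sup (fun v => phiStar φY v * dstar δ p.1 v q.1) := by
              apply Finset.sup_le
              intro c _
              have hRA : RA φY δ p.1 c ≤ (W c).sup (fun w =>
                  phiStar φY ((w.map Sum.inr : List (X ⊕ Y)))
                    * dstar δ p.1 (w.map Sum.inr) c) := hW c
              calc (RA φY δ p.1 c * δ c (Sum.inl x) r.1)
                    * (Fr r).sup (fun v => phiStar φY v * dstar δ r.1 v q.1)
                  ≤ ((W c).sup (fun w => phiStar φY ((w.map Sum.inr : List (X ⊕ Y)))
                        * dstar δ p.1 (w.map Sum.inr) c) * δ c (Sum.inl x) r.1)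
                      * (Fr r).sup (fun v => phiStar φY v * dstar δ r.1 v q.1) :=
                    ILM.mul_le_mul_right (ILM.mul_le_mul_right hRA _) _
                _ = (W c).sup (fun w => (phiStar φY ((w.map Sum.inr : List (X ⊕ Y)))
                        * dstar δ p.1 (w.map Sum.inr) c * δ c (Sum.inl x) r.1)
                      * (Fr r).sup (fun v => phiStar φY v * dstar δ r.1 v q.1)) := by
                    rw [ILM.finset_sup_mul, ILM.finset_sup_mul]
                _ ≤ G.sup (fun v => phiStar φY v * dstar δ p.1 v q.1) := by
                    apply Finset.sup_le
                    intro w hw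
                    rw [ILM.mul_finset_sup]
                    apply Finset.sup_le
                    intro v hv
                    refine le_trans (soundStep φY hδc p.1 c r.1 q.1 x w v) ?_
                    exact Finset.le_sup (f := fun v => phiStar φY v * dstar δ p.1 v q.1)
                      (memG c w v hw hv)

lemma completeness {δ : A → X ⊕ Y → A → L} [Fintype ↥(redStates δ a0)]
    (hδc : ∀ a z b, Crisp (δ a z b)) (τ : A → L)
    (δr : ↥(redStates δ a0) → X → ↥(redStates δ a0) → L)
    (hδr : ∀ p x q, δr p x q
      = Finset.univ.sup fun c => RA φY δ p.1 c * δ c (Sum.inl x) q.1)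
    (τr : ↥(redStates δ a0) → L)
    (hτr : ∀ p, τr p = Finset.univ.sup fun c => RA φY δ p.1 c * τ c)
    (hne : (1 : L) ≠ ⊥) :
    ∀ (u : List X) (v : List (X ⊕ Y)), v ∈ UY Y u →
      ∀ (p : ↥(redStates δ a0)) (c : A), dstar δ p.1 v c = 1 →
      phiStar φY v * τ c
        ≤ Finset.univ.sup (fun q : ↥(redStates δ a0) => dstar δr p u q * τr q) := by
  intro u
  induction u with
  | nil =>
      intro v hvU p c hd
      obtain ⟨w, rfl⟩ := (UY_nil_iff v).mp hvU
      have hP2 : phiStar φY ((w.map Sum.inr : List (X ⊕ Y))) ≤ RA φY δ p.1 c := by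
        have := phiStar_dstar_le_RA φY hδc w p.1 c
        rwa [hd, mul_one] at this
      have h1 : phiStar φY ((w.map Sum.inr : List (X ⊕ Y))) * τ c ≤ τr p := by
        rw [hτr]
        exact le_trans (ILM.mul_le_mul_right hP2 (τ c))
          (Finset.le_sup (f := fun c => RA φY δ p.1 c * τ c) (Finset.mem_univ c))
      refine le_trans h1 ?_
      refine le_trans (le_of_eq ?_) (Finset.le_sup
        (f := fun q : ↥(redStates δ a0) => dstar δr p [] q * τr q) (Finset.mem_univ p))
      show τr p = dstar δr p [] p * τr p
      rw [dstar_nil, if_pos rfl, one_mul]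
  | cons x u ihu =>
      intro v hvU p c hd
      obtain ⟨w, v', rfl, hv'U⟩ := UY_cons_iff x u v hvU
      set w' : List (X ⊕ Y) := w.map Sum.inr with hw'
      -- split the successful run
      have hsplit : v' ∈ UY Y u := hv'U
      have hdec : (w' ++ Sum.inl x :: v') = (w' ++ [Sum.inl x]) ++ v' := by
        rw [List.append_assoc]; rfl
      rw [hdec] at hd
      rw [dstar_append] at hd
      obtain ⟨r, _, hr⟩ := Crisp.sup_eq_one (fun d _ =>
        Crisp.mul (dstar_crisp hδc _ _ _) (dstar_crisp hδc _ _ _)) hd hne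
      obtain ⟨hr1, hr2⟩ := Crisp.mul_eq_one (dstar_crisp hδc _ _ _)
        (dstar_crisp hδc _ _ _) hr hne
      rw [dstar_snoc] at hr1
      obtain ⟨d, _, hdterm⟩ := Crisp.sup_eq_one (fun e _ =>
        Crisp.mul (dstar_crisp hδc _ _ _) (hδc _ _ _)) hr1 hne
      obtain ⟨hd1, hd2⟩ := Crisp.mul_eq_one (dstar_crisp hδc _ _ _)
        (hδc _ _ _) hdterm hne
      -- r is a reduced state
      have hrmem : r ∈ redStates δ a0 := Or.inr ⟨d, x, hd2⟩
      set rP : ↥(redStates δ a0) := ⟨r, hrmem⟩ with hrP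
      -- φ*(w') is below the reduced transition
      have hstep : phiStar φY w' ≤ δr p x rP := by
        rw [hδr]
        have hP : phiStar φY w' ≤ RA φY δ p.1 d := by
          have := phiStar_dstar_le_RA φY hδc w p.1 d
          rw [← hw'] at this
          rwa [hd1, mul_one] at this
        have : RA φY δ p.1 d * δ d (Sum.inl x) rP.1
            ≤ Finset.univ.sup fun e => RA φY δ p.1 e * δ e (Sum.inl x) rP.1 :=
          Finset.le_sup (f := fun e => RA φY δ p.1 e * δ e (Sum.inl x) rP.1)
            (Finset.mem_univ d)
        rw [show rP.1 = r from rfl, hd2, mul_one] at this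
        exact le_trans hP this
      have hIH : phiStar φY v' * τ c
          ≤ Finset.univ.sup (fun q : ↥(redStates δ a0) => dstar δr rP u q * τr q) :=
        ihu v' hsplit rP c hr2
      have hφ : phiStar φY (w' ++ Sum.inl x :: v') = phiStar φY w' * phiStar φY v' := by
        rw [phiStar_append, phiStar_cons_inl]
      rw [hφ, mul_assoc]
      calc phiStar φY w' * (phiStar φY v' * τ c)
          ≤ δr p x rP * Finset.univ.sup
              (fun q : ↥(redStates δ a0) => dstar δr rP u q * τr q) :=
            ILM.mul_le_mul hstep hIH
        _ = Finset.univ.sup (fun q : ↥(redStates δ a0) =>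
              δr p x rP * (dstar δr rP u q * τr q)) := ILM.mul_finset_sup _ _ _
        _ ≤ Finset.univ.sup (fun q : ↥(redStates δ a0) =>
              dstar δr p (x :: u) q * τr q) := by
            apply Finset.sup_le
            intro q _
            rw [← mul_assoc]
            refine le_trans (ILM.mul_le_mul_right ?_ (τr q))
              (Finset.le_sup (f := fun q => dstar δr p (x :: u) q * τr q)
                (Finset.mem_univ q))
            rw [dstar_cons]
            exact Finset.le_sup (f := fun s => δr p x s * dstar δr s u q)
              (Finset.mem_univ rP)

end Automata

end Fz

namespace Fz

section SoundFinal

variable {L X Y A : Type*} [IntegralLMonoid L] [Fintype Y] [Fintype A]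

lemma soundFinal (φY : Y → L) {δ : A → X ⊕ Y → A → L}
    (hδc : ∀ a z b, Crisp (δ a z b)) (τ : A → L) (a0 q c : A)
    (v : List (X ⊕ Y)) (w : List Y) :
    (phiStar φY v * dstar δ a0 v q) *
        ((phiStar φY ((w.map Sum.inr : List (X ⊕ Y))) * dstar δ q (w.map Sum.inr) c) * τ c)
      ≤ phiStar φY (v ++ (w.map Sum.inr : List (X ⊕ Y)))
          * lang δ a0 τ (v ++ (w.map Sum.inr : List (X ⊕ Y))) := by
  set w' : List (X ⊕ Y) := w.map Sum.inr with hw'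
  set P1 := phiStar φY v
  set P2 := phiStar φY w'
  set D1 := dstar δ a0 v q with hD1
  set D2 := dstar δ q w' c with hD2
  set T := τ c
  have hre : (P1 * D1) * ((P2 * D2) * T) = (P1 * P2) * ((D1 * D2) * T) := by
    rw [mul_assoc P2 D2 T]
    rw [ILM.reassoc (Crisp.comm (dstar_crisp hδc a0 v q) P2) P1 (D2 * T)]
    rw [← mul_assoc D1 D2 T]
  rw [hre]
  have hφ : phiStar φY (v ++ w') = P1 * P2 := phiStar_append φY v w'
  rw [hφ]
  apply ILM.mul_le_mul_left
  have h1 : D1 * D2 ≤ dstar δ a0 (v ++ w') c := by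
    conv_rhs => rw [dstar_append]
    exact Finset.le_sup (f := fun d => dstar δ a0 v d * dstar δ d w' c)
      (Finset.mem_univ q)
  calc (D1 * D2) * T ≤ dstar δ a0 (v ++ w') c * τ c := ILM.mul_le_mul_right h1 T
    _ ≤ lang δ a0 τ (v ++ w') :=
        Finset.le_sup (f := fun b => dstar δ a0 (v ++ w') b * τ b) (Finset.mem_univ c)

end SoundFinal

end Fz
open Fz in
/-- **Theorem 5 of the paper.** Let `L` be an integral ℓ-monoid, `α` a
fuzzy regular expression over a finite alphabet `X` with associated alphabet `Y`,
`A = (A, X∪Y, δ, a₀, τ)` an arbitrary nondeterministic finite automaton recognizing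
`‖α_R‖`, and `A^r_α` the reduced fuzzy automaton associated with `A` and `α`
(with state set `A^r_α`, transitions `δ^{A^r_α}_x = R_A ∘ δ_x` and terminal fuzzy set
`τ^{A^r_α} = R_A ∘ τ`, restricted to `A^r_α`).  Then `L(A^r_α) = ‖α‖`. -/
theorem stmt11 {L X Y A : Type*} [IntegralLMonoid L] [Fintype X] [Fintype Y] [Fintype A]
    (α : FRE X L) (sc : L → Y) (φY : Y → L)
    (hsc : Set.BijOn sc α.scalars (Set.univ : Set Y))
    (hφY : ∀ l ∈ α.scalars, φY (sc l) = l)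
    (δ : A → X ⊕ Y → A → L) (a0 : A) (τ : A → L)
    (hδ : ∀ a z b, δ a z b = 1 ∨ δ a z b = ⊥)
    (hτ : ∀ a, τ a = 1 ∨ τ a = ⊥)
    (hrec : ∀ v : List (X ⊕ Y), lang δ a0 τ v = langR sc α v)
    (f : List X → L) (hf : IsNorm α f) :
    ∀ u : List X,
      lang
        (fun (p : redStates δ a0) (x : X) (q : redStates δ a0) =>
          fcomp (RA φY δ) (fun c d => δ c (Sum.inl x) d) p.1 q.1)
        (⟨a0, by exact Or.inl rfl⟩ : redStates δ a0)
        (fun p : redStates δ a0 => fcompf (RA φY δ) τ p.1)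
        u = f u := by

  classical
  intro u
  by_cases htriv : (1 : L) = ⊥
  · exact (ILM.trivial_of_one_eq_bot htriv _).trans
      (ILM.trivial_of_one_eq_bot htriv _).symm
  have hδc : ∀ a z b, Crisp (δ a z b) := hδ
  have hτc : ∀ a, Crisp (τ a) := hτ
  obtain ⟨ub, rep⟩ := Fz.mainLemma sc φY hf hφY u
  set δr := fun (p : redStates δ a0) (x : X) (q : redStates δ a0) =>
    fcomp (RA φY δ) (fun c d => δ c (Sum.inl x) d) p.1 q.1 with hδrdef
  set τr := fun p : redStates δ a0 => fcompf (RA φY δ) τ p.1 with hτrdef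
  have hδr : ∀ (p : redStates δ a0) (x : X) (q : redStates δ a0),
      δr p x q = Finset.univ.sup fun c => RA φY δ p.1 c * δ c (Sum.inl x) q.1 :=
    fun p x q => rfl
  have hτrl : ∀ p : redStates δ a0,
      τr p = Finset.univ.sup fun c => RA φY δ p.1 c * τ c := fun p => rfl
  set a0' : redStates δ a0 := (⟨a0, by exact Or.inl rfl⟩ : redStates δ a0) with ha0'
  apply le_antisymm
  · -- soundness : L(A^r) ≤ ‖α‖
    show (Finset.univ.sup fun q : redStates δ a0 => dstar δr a0' u q * τr q) ≤ f u
    apply Finset.sup_le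
    intro q _
    obtain ⟨F, hFU, hFb⟩ := soundAux φY a0 hδc δr hδr u a0' q
    calc dstar δr a0' u q * τr q
        ≤ (F.sup fun v => phiStar φY v * dstar δ a0'.1 v q.1) * τr q :=
          ILM.mul_le_mul_right hFb (τr q)
      _ = F.sup (fun v => (phiStar φY v * dstar δ a0'.1 v q.1) * τr q) :=
          ILM.finset_sup_mul _ _ _
      _ ≤ f u := by
          apply Finset.sup_le
          intro v hv
          rw [hτrl q, ILM.mul_finset_sup]
          apply Finset.sup_le
          intro c _
          obtain ⟨W, hW⟩ := rpow_le_wordSup φY hδc (Fintype.card A) q.1 c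
          have hWle : RA φY δ q.1 c ≤ W.sup fun w =>
              phiStar φY ((w.map Sum.inr : List (X ⊕ Y)))
                * dstar δ q.1 (w.map Sum.inr) c := hW
          calc (phiStar φY v * dstar δ a0'.1 v q.1) * (RA φY δ q.1 c * τ c)
              ≤ (phiStar φY v * dstar δ a0'.1 v q.1) *
                  ((W.sup fun w => phiStar φY ((w.map Sum.inr : List (X ⊕ Y)))
                    * dstar δ q.1 (w.map Sum.inr) c) * τ c) :=
                ILM.mul_le_mul_left (ILM.mul_le_mul_right hWle (τ c)) _
            _ = W.sup (fun w => (phiStar φY v * dstar δ a0'.1 v q.1) *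
                  ((phiStar φY ((w.map Sum.inr : List (X ⊕ Y)))
                    * dstar δ q.1 (w.map Sum.inr) c) * τ c)) := by
                rw [ILM.finset_sup_mul, ILM.mul_finset_sup]
            _ ≤ f u := by
                apply Finset.sup_le
                intro w _
                refine le_trans (soundFinal φY hδc τ a0'.1 q.1 c v w) ?_
                have hmemU : (v ++ (w.map Sum.inr : List (X ⊕ Y))) ∈ UY Y u := by
                  have := UY_append (hFU v hv) (map_inr_mem_UY_nil (X := X) w)
                  rwa [List.append_nil] at this
                have hlangR : lang δ a0 τ (v ++ (w.map Sum.inr : List (X ⊕ Y)))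
                    = langR sc α (v ++ (w.map Sum.inr : List (X ⊕ Y))) := hrec _
                have ha0v : a0'.1 = a0 := rfl
                rw [ha0v, hlangR]
                by_cases hmem : (v ++ (w.map Sum.inr : List (X ⊕ Y)))
                    ∈ (toReg sc α).matches'
                · have : langR sc α (v ++ (w.map Sum.inr : List (X ⊕ Y))) = 1 :=
                    if_pos hmem
                  rw [this, mul_one]
                  exact ub _ hmemU hmem
                · have : langR sc α (v ++ (w.map Sum.inr : List (X ⊕ Y))) = ⊥ :=
                    if_neg hmem
                  rw [this, LMonoid.mul_bot]
                  exact bot_le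
  · -- completeness : ‖α‖ ≤ L(A^r)
    obtain ⟨F, hFmem, hrep⟩ := rep
    refine le_trans hrep ?_
    apply Finset.sup_le
    intro v hv
    obtain ⟨hvU, hvm⟩ := hFmem v hv
    have hl : lang δ a0 τ v = 1 := by
      rw [hrec v]
      exact if_pos hvm
    obtain ⟨b, _, hb⟩ := Crisp.sup_eq_one
      (fun b _ => Crisp.mul (dstar_crisp hδc a0 v b) (hτc b)) hl htriv
    obtain ⟨hb1, hb2⟩ := Crisp.mul_eq_one (dstar_crisp hδc a0 v b) (hτc b) hb htriv
    have hcomp := completeness φY a0 hδc τ δr hδr τr hτrl htriv u v hvU a0' b hb1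
    rw [hb2, mul_one] at hcomp
    exact hcomp
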